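/- For every positive integer k, the binomial coefficient C(3k, k) satisfies C(3k, k) < (1/√(4πk/3)) · (27/4)^k, i.e. C(3k, k) < √(3/(4πk)) · (3√3/2)^{2k}. -/

import Mathlib

/-!
Common setup: `F_q((1/t))` is realized as `LaurentSeries Fq` (formal Laurent series in `X`)
under the identification `X = 1/t`; thus the coefficient of `t^i` is the coefficient of
`X^(-i)`, and `𝕋` consists of series supported on positive powers of `X`.
-/

open Polynomial
open scoped Classical

/-- The element `t` of `F_q((1/t))`, i.e. the Laurent series `X⁻¹`. -/
noncomputable def tElem (Fq : Type) [Field Fq] : LaurentSeries Fq :=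
  HahnSeries.single (-1 : ℤ) 1

/-- The natural embedding of `F_q[t]` into `F_q((1/t))`: evaluate the polynomial at `t`. -/
noncomputable def toL {Fq : Type} [Field Fq] (f : Polynomial Fq) : LaurentSeries Fq :=
  Polynomial.aeval (tElem Fq) f

/-- The norm on `F_q((1/t))`: `|x| = q^j` where `j` is the largest index with `x_j ≠ 0`
(in `t`-coefficients, so `j = -(order of the Hahn series)`), and `|0| = 0`. -/
noncomputable def nrm {Fq : Type} [Field Fq] [Fintype Fq] (x : LaurentSeries Fq) : ℝ :=
  if x = 0 then 0 else (Fintype.card Fq : ℝ) ^ (-(HahnSeries.order x))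

/-- `𝕋 = {∑_{i<0} x_i t^i}`: Laurent series supported on negative powers of `t`. -/
def TT (Fq : Type) [Field Fq] : Set (LaurentSeries Fq) :=
  {x | ∀ n : ℤ, n ≤ 0 → x.coeff n = 0}

/-- The exponential `e_q(x) = ψ(x_{-1})`, where `ψ(y) = e^{2πi·tr(y)/p}` with
`tr : F_q → F_p` the field trace, and `x_{-1}` is the coefficient of `t^{-1}` in `x`
(the coefficient of `X^1` of the Hahn series). -/
noncomputable def eQ {Fq : Type} [Field Fq] [Fintype Fq] (p : ℕ) [CharP Fq p]
    (x : LaurentSeries Fq) : ℂ :=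
  letI := ZMod.algebra Fq p
  Complex.exp (2 * Real.pi * Complex.I *
    (((Algebra.trace (ZMod p) Fq (x.coeff 1)).val : ℂ) / (p : ℂ)))

/-- The Möbius function on `F_q[t]`: `μ(f) = (-1)^r` if `f` is a product of `r` distinct
irreducibles, and `μ(f) = 0` otherwise. -/
noncomputable def mu {Fq : Type} [Field Fq] (f : Polynomial Fq) : ℤ :=
  if Squarefree f then
    (-1) ^ Multiset.card (UniqueFactorizationMonoid.normalizedFactors f)
  else 0

/-- The monic polynomial `X^n + ∑_{i<n} c_i X^i`; monic polynomials of degree `n`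
are exactly the `stdPoly n c` for a unique `c : Fin n → Fq`. -/
noncomputable def stdPoly {Fq : Type} [Field Fq] (n : ℕ) (c : Fin n → Fq) : Polynomial Fq :=
  X ^ n + ∑ i : Fin n, C (c i) * X ^ (i : ℕ)

/-- The polynomial `∑_{i<k} c_i X^i` of degree `< k`. -/
noncomputable def ltPoly {Fq : Type} [Field Fq] (k : ℕ) (c : Fin k → Fq) : Polynomial Fq :=
  ∑ i : Fin k, C (c i) * X ^ (i : ℕ)

/-- Hayes' relation `R_{s,g}` on monic polynomials:
`a ≡ b mod R_{s,g}` iff `g ∣ a - b` and `|a/t^{deg a} - b/t^{deg b}| < q^{-s}`.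
(Here `1/t^{deg a}` is the Laurent series `X^{deg a}`.) -/
def Requiv {Fq : Type} [Field Fq] [Fintype Fq] (s : ℕ) (g a b : Polynomial Fq) : Prop :=
  g ∣ (a - b) ∧
  nrm (toL a * HahnSeries.single (a.natDegree : ℤ) 1 -
        toL b * HahnSeries.single (b.natDegree : ℤ) 1)
    < (Fintype.card Fq : ℝ) ^ (-(s : ℤ))

/-- `φ(g)`: the number of invertible residue classes modulo `g`. -/
noncomputable def phi {Fq : Type} [Field Fq] (g : Polynomial Fq) : ℕ :=
  Nat.card ((Polynomial Fq ⧸ Ideal.span {g})ˣ)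

/-- `χ` is (the extension by zero of) a character of the unit group `R*_{s,g}` of the quotient
monoid of monic polynomials modulo `R_{s,g}`: it vanishes off monic polynomials, it is
multiplicative on monic polynomials, it is constant on `R_{s,g}`-classes, and it vanishes at a
monic polynomial exactly when that polynomial is not coprime to `g`.  (Such functions correspond
bijectively to the characters of the finite abelian group `R*_{s,g}`.) -/
def IsRChar {Fq : Type} [Field Fq] [Fintype Fq] (s : ℕ) (g : Polynomial Fq)
    (χ : Polynomial Fq → ℂ) : Prop :=
  (∀ f : Polynomial Fq, ¬ f.Monic → χ f = 0) ∧
  (∀ a b : Polynomial Fq, a.Monic → b.Monic → χ (a * b) = χ a * χ b) ∧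
  (∀ a b : Polynomial Fq, a.Monic → b.Monic → Requiv s g a b → χ a = χ b) ∧
  (∀ f : Polynomial Fq, f.Monic → (χ f = 0 ↔ ¬ IsCoprime f g))

section StirlingAux
open Stirling Real Filter Topology

lemma step_upper (n : ℕ) :
    Real.log (stirlingSeq (n+1)) - Real.log (stirlingSeq (n+2)) ≤
      1/4 * (1/((n:ℝ)+1) - 1/((n:ℝ)+2)) := by
  refine (log_stirlingSeq_diff_le_geo_sum n).trans_eq ?_
  have hn : (0:ℝ) ≤ (n:ℝ) := Nat.cast_nonneg n
  have h3 : (2*((n:ℝ)+1)+1) ≠ 0 := by positivity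
  have h4 : 1 - ((1:ℝ) / (2 * ((n:ℝ)+1) + 1)) ^ 2 ≠ 0 := by
    rw [sub_ne_zero]
    intro h
    have h' := h.symm
    rw [div_pow, one_pow, div_eq_one_iff_eq (by positivity)] at h'
    nlinarith
  have hr : 1/4 * (1/((n:ℝ)+1) - 1/((n:ℝ)+2)) = 1 / (4*((n:ℝ)+1)*((n:ℝ)+2)) := by
    field_simp
    ring
  push_cast
  rw [hr, div_eq_div_iff h4 (by positivity)]
  field_simp
  ring

lemma step_lower (n : ℕ) :
    1/6 * (1/(2*((n:ℝ)+1)+1) - 1/(2*((n:ℝ)+2)+1)) ≤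
      Real.log (stirlingSeq (n+1)) - Real.log (stirlingSeq (n+2)) := by
  have h := log_stirlingSeq_diff_hasSum n
  have h0 : (1:ℝ) / (2*((0:ℕ)+1:ℕ) + 1) * ((1 / (2 * ((n:ℕ)+1:ℕ) + 1)) ^ 2) ^ ((0:ℕ)+1:ℕ)
      ≤ Real.log (stirlingSeq (n+1)) - Real.log (stirlingSeq (n+2)) :=
    le_hasSum h 0 (fun j _ => by positivity)
  refine le_trans ?_ h0
  have hn : (0:ℝ) ≤ (n:ℝ) := Nat.cast_nonneg n
  push_cast
  rw [pow_one, div_pow, one_pow]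
  rw [show (1:ℝ)/(2*1+1) * (1/(2*((n:ℝ)+1)+1)^2) = 1/(3*(2*((n:ℝ)+1)+1)^2) from by rw [div_mul_div_comm]; norm_num]
  rw [div_sub_div _ _ (by positivity : (2*((n:ℝ)+1)+1) ≠ 0) (by positivity : (2*((n:ℝ)+2)+1) ≠ 0)]
  rw [div_mul_div_comm, one_mul, div_le_div_iff₀ (by positivity) (by positivity)]
  nlinarith

lemma tele_upper (n : ℕ) : ∀ m : ℕ,
    Real.log (stirlingSeq (n+1)) - Real.log (stirlingSeq (n+1+m)) ≤
      1/4 * (1/((n:ℝ)+1) - 1/((n:ℝ)+1+(m:ℝ))) := by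
  intro m
  induction m with
  | zero => simp
  | succ m ih =>
    have h := step_upper (n+m)
    have e1 : n+1+(m+1) = (n+m)+2 := by omega
    have e2 : n+1+m = (n+m)+1 := by omega
    rw [e1]
    rw [e2] at ih
    push_cast at h ih ⊢
    ring_nf at h ih ⊢
    linarith

lemma tele_lower (n : ℕ) : ∀ m : ℕ,
    1/6 * (1/(2*((n:ℝ)+1)+1) - 1/(2*((n:ℝ)+1+(m:ℝ))+1)) ≤
      Real.log (stirlingSeq (n+1)) - Real.log (stirlingSeq (n+1+m)) := by
  intro m
  induction m with
  | zero => simp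
  | succ m ih =>
    have h := step_lower (n+m)
    have e1 : n+1+(m+1) = (n+m)+2 := by omega
    have e2 : n+1+m = (n+m)+1 := by omega
    rw [e1]
    rw [e2] at ih
    push_cast at h ih ⊢
    ring_nf at h ih ⊢
    linarith

lemma tendsto_shift (n : ℕ) :
    Tendsto (fun m : ℕ => Real.log (stirlingSeq (n+1+m))) atTop (𝓝 (Real.log (Real.sqrt π))) := by
  have t1 : Tendsto (fun m : ℕ => stirlingSeq (n+1+m)) atTop (𝓝 (Real.sqrt π)) :=
    tendsto_stirlingSeq_sqrt_pi.comp
      (tendsto_atTop_mono (fun m => Nat.le_add_left m (n+1)) tendsto_id)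
  exact t1.log (ne_of_gt (Real.sqrt_pos.mpr Real.pi_pos))

lemma tendsto_inv_aux (c : ℝ) :
    Tendsto (fun m : ℕ => 1/(c+(m:ℝ))) atTop (𝓝 0) := by
  simp only [one_div]
  exact (tendsto_atTop_add_const_left atTop c
    (tendsto_natCast_atTop_atTop (R := ℝ))).inv_tendsto_atTop

lemma log_upper (n : ℕ) :
    Real.log (stirlingSeq (n+1)) ≤ Real.log (Real.sqrt π) + 1/4 * (1/((n:ℝ)+1)) := by
  have hlim : Tendsto (fun m : ℕ => Real.log (stirlingSeq (n+1+m))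
      + 1/4 * (1/((n:ℝ)+1) - 1/((n:ℝ)+1+(m:ℝ)))) atTop
      (𝓝 (Real.log (Real.sqrt π) + 1/4 * (1/((n:ℝ)+1) - 0))) :=
    (tendsto_shift n).add
      ((tendsto_const_nhds.sub (tendsto_inv_aux ((n:ℝ)+1))).const_mul (1/4))
  rw [sub_zero] at hlim
  exact ge_of_tendsto' hlim (fun m => by linarith [tele_upper n m])

lemma log_lower (n : ℕ) :
    Real.log (Real.sqrt π) + 1/6 * (1/(2*((n:ℝ)+1)+1)) ≤ Real.log (stirlingSeq (n+1)) := by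
  have hlim : Tendsto (fun m : ℕ => Real.log (stirlingSeq (n+1+m))
      + 1/6 * (1/(2*((n:ℝ)+1)+1) - 1/(2*((n:ℝ)+1+(m:ℝ))+1))) atTop
      (𝓝 (Real.log (Real.sqrt π) + 1/6 * (1/(2*((n:ℝ)+1)+1) - 0))) := by
    refine (tendsto_shift n).add (Tendsto.const_mul (1/6) (tendsto_const_nhds.sub ?_))
    have : Tendsto (fun m : ℕ => 1/(2*((n:ℝ)+1)+1+2*(m:ℝ))) atTop (𝓝 0) := by
      simp only [one_div]
      exact (tendsto_atTop_add_const_left atTop _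
        ((tendsto_natCast_atTop_atTop (R := ℝ)).const_mul_atTop two_pos)).inv_tendsto_atTop
    refine this.congr (fun m => by ring_nf)
  rw [sub_zero] at hlim
  exact le_of_tendsto' hlim (fun m => by linarith [tele_lower n m])

lemma stirling_ratio (j : ℕ) :
    stirlingSeq (3*(j+1)) * Real.sqrt π < stirlingSeq (j+1) * stirlingSeq (2*(j+1)) := by
  have h3 : 3*(j+1) = (3*j+2)+1 := by omega
  have h2 : 2*(j+1) = (2*j+1)+1 := by omega
  have hu := log_upper (3*j+2)
  have hl1 := log_lower j
  have hl2 := log_lower (2*j+1)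
  push_cast at hu hl1 hl2
  have hj : (0:ℝ) ≤ (j:ℝ) := Nat.cast_nonneg j
  have hX : (0:ℝ) < 3*(j:ℝ)+2+1 := by linarith
  have hY : (0:ℝ) < 2*((j:ℝ)+1)+1 := by linarith
  have hZ : (0:ℝ) < 2*(2*(j:ℝ)+1+1)+1 := by linarith
  have e : 1/6*(1/(2*((j:ℝ)+1)+1)) + 1/6*(1/(2*(2*(j:ℝ)+1+1)+1)) - 1/4*(1/(3*(j:ℝ)+2+1))
      = (12*(j:ℝ)^2+18*j+3)/(12*(3*(j:ℝ)+2+1)*(2*((j:ℝ)+1)+1)*(2*(2*(j:ℝ)+1+1)+1)) := by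
    field_simp
    ring
  have hfrac : (0:ℝ) < (12*(j:ℝ)^2+18*j+3)/(12*(3*(j:ℝ)+2+1)*(2*((j:ℝ)+1)+1)*(2*(2*(j:ℝ)+1+1)+1)) := by
    positivity
  have hlog : Real.log (stirlingSeq (3*(j+1))) + Real.log (Real.sqrt π)
      < Real.log (stirlingSeq (j+1)) + Real.log (stirlingSeq (2*(j+1))) := by
    rw [h3, h2]
    linarith
  have p1 : 0 < stirlingSeq (3*(j+1)) := by rw [h3]; exact stirlingSeq'_pos _
  have p2 : 0 < stirlingSeq (j+1) := stirlingSeq'_pos _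
  have p3 : 0 < stirlingSeq (2*(j+1)) := by rw [h2]; exact stirlingSeq'_pos _
  have psqrt : (0:ℝ) < Real.sqrt π := Real.sqrt_pos.mpr Real.pi_pos
  have := (Real.log_lt_log_iff (mul_pos p1 psqrt) (mul_pos p2 p3)).mp
    (by rw [Real.log_mul (ne_of_gt p1) (ne_of_gt psqrt),
            Real.log_mul (ne_of_gt p2) (ne_of_gt p3)]; exact hlog)
  exact this

lemma factorial_eq (n : ℕ) (hn : 0 < n) :
    (Nat.factorial n : ℝ) = stirlingSeq n * (Real.sqrt (2*(n:ℝ)) * ((n:ℝ) / Real.exp 1) ^ n) := by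
  have hn' : (0:ℝ) < (n:ℝ) := by exact_mod_cast hn
  have hd : Real.sqrt (2*(n:ℝ)) * ((n:ℝ)/Real.exp 1)^n ≠ 0 := by positivity
  rw [stirlingSeq, div_mul_cancel₀ _ hd]

lemma keyid (k : ℕ) (hK : (0:ℝ) < (k:ℝ)) :
    Real.sqrt (2*(3*(k:ℝ))) * ((3*(k:ℝ))/Real.exp 1)^(3*k)
      = Real.sqrt π * (Real.sqrt (3/(4*π*(k:ℝ))) * (27/4)^k) *
        ((Real.sqrt (2*(k:ℝ)) * ((k:ℝ)/Real.exp 1)^k) *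
         (Real.sqrt (2*(2*(k:ℝ))) * ((2*(k:ℝ))/Real.exp 1)^(2*k))) := by
  have hπ : (0:ℝ) < π := Real.pi_pos
  have he : (0:ℝ) < Real.exp 1 := Real.exp_pos 1
  have hs : Real.sqrt π * Real.sqrt (3/(4*π*(k:ℝ)))
      * (Real.sqrt (2*(k:ℝ)) * Real.sqrt (2*(2*(k:ℝ))))
      = Real.sqrt (2*(3*(k:ℝ))) := by
    rw [← Real.sqrt_mul hπ.le, ← Real.sqrt_mul (by positivity), ← Real.sqrt_mul (by positivity)]
    congr 1
    field_simp
    ring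
  have hp : ((3*(k:ℝ))/Real.exp 1)^(3*k)
      = (27/4:ℝ)^k * (((k:ℝ)/Real.exp 1)^k * ((2*(k:ℝ))/Real.exp 1)^(2*k)) := by
    rw [pow_mul, pow_mul, ← mul_pow, ← mul_pow]
    congr 1
    have hee : Real.exp 1 * Real.exp 2 = Real.exp 3 := by rw [← Real.exp_add]; norm_num
    field_simp
    linear_combination (0:ℝ) * hee
  calc Real.sqrt (2*(3*(k:ℝ))) * ((3*(k:ℝ))/Real.exp 1)^(3*k)
      = (Real.sqrt π * Real.sqrt (3/(4*π*(k:ℝ)))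
          * (Real.sqrt (2*(k:ℝ)) * Real.sqrt (2*(2*(k:ℝ)))))
        * ((27/4:ℝ)^k * (((k:ℝ)/Real.exp 1)^k * ((2*(k:ℝ))/Real.exp 1)^(2*k))) := by
        rw [hs, hp]
    _ = _ := by ring

lemma main_bound (k : ℕ) (hk : 0 < k) :
    (Nat.choose (3 * k) k : ℝ) < Real.sqrt (3 / (4 * π * k)) * (27 / 4) ^ k := by
  have hK : (0:ℝ) < (k:ℝ) := by exact_mod_cast hk
  have hπ : (0:ℝ) < π := Real.pi_pos
  have he : (0:ℝ) < Real.exp 1 := Real.exp_pos 1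
  have psqrt : (0:ℝ) < Real.sqrt π := Real.sqrt_pos.mpr hπ
  obtain ⟨j, rfl⟩ : ∃ j, k = j+1 := ⟨k-1, by omega⟩
  set k' := j+1 with hk'
  have hA : 0 < stirlingSeq (3*k') := by
    rw [show 3*k' = (3*j+2)+1 by omega]; exact stirlingSeq'_pos _
  have hB : 0 < stirlingSeq k' := stirlingSeq'_pos _
  have hC : 0 < stirlingSeq (2*k') := by
    rw [show 2*k' = (2*j+1)+1 by omega]; exact stirlingSeq'_pos _
  have hratio : stirlingSeq (3*k') * Real.sqrt π < stirlingSeq k' * stirlingSeq (2*k') :=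
    stirling_ratio j
  have f3 := factorial_eq (3*k') (by omega)
  have f1 := factorial_eq k' (by omega)
  have f2 := factorial_eq (2*k') (by omega)
  have c3 : ((3*k' : ℕ) : ℝ) = 3*(k':ℝ) := by push_cast; ring
  have c2 : ((2*k' : ℕ) : ℝ) = 2*(k':ℝ) := by push_cast; ring
  rw [c3] at f3
  rw [c2] at f2
  set T : ℝ := Real.sqrt (3 / (4 * π * (k':ℝ))) * (27 / 4) ^ k' with hT
  have hTpos : 0 < T := by
    rw [hT]; positivity
  have hfact : (Nat.factorial (3*k') : ℝ) < T * (Nat.factorial k' * Nat.factorial (2*k')) := by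
    rw [f3, f1, f2]
    have hD3 : (0:ℝ) < Real.sqrt (2*(3*(k':ℝ))) * ((3*(k':ℝ))/Real.exp 1)^(3*k') := by
      positivity
    calc stirlingSeq (3*k') * (Real.sqrt (2*(3*(k':ℝ))) * ((3*(k':ℝ))/Real.exp 1)^(3*k'))
        < (stirlingSeq k' * stirlingSeq (2*k') / Real.sqrt π)
          * (Real.sqrt (2*(3*(k':ℝ))) * ((3*(k':ℝ))/Real.exp 1)^(3*k')) := by
          apply mul_lt_mul_of_pos_right _ hD3
          rw [lt_div_iff₀ psqrt]
          exact hratio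
      _ = T * (stirlingSeq k' * (Real.sqrt (2*(k':ℝ)) * ((k':ℝ)/Real.exp 1)^k')
            * (stirlingSeq (2*k') * (Real.sqrt (2*(2*(k':ℝ))) * ((2*(k':ℝ))/Real.exp 1)^(2*k')))) := by
          rw [keyid k' hK, hT]
          field_simp
  have hchoose : ((3*k').choose k' : ℝ) * (Nat.factorial k' * Nat.factorial (2*k')) = (Nat.factorial (3*k') : ℝ) := by
    have h := Nat.choose_mul_factorial_mul_factorial (show k' ≤ 3*k' by omega)
    have h2 : 3*k' - k' = 2*k' := by omega
    rw [h2] at h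
    exact_mod_cast congrArg (fun x : ℕ => (x:ℝ)) (by rw [← h]; ring)
  have hP : (0:ℝ) < (Nat.factorial k' : ℝ) * (Nat.factorial (2*k') : ℝ) := by positivity
  have := hchoose.trans_lt hfact
  exact lt_of_mul_lt_mul_right this hP.le

end StirlingAux

/-- For every positive integer `k`,
`C(3k, k) < (1/√(4πk/3))·(27/4)^k`, i.e. `C(3k, k) < √(3/(4πk))·(3√3/2)^{2k}`. -/
theorem choose_three_k_k_bound (k : ℕ) (hk : 0 < k) :
    (Nat.choose (3 * k) k : ℝ)
        < 1 / Real.sqrt (4 * Real.pi * k / 3) * (27 / 4) ^ k ∧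
    (Nat.choose (3 * k) k : ℝ)
        < Real.sqrt (3 / (4 * Real.pi * k)) * (3 * Real.sqrt 3 / 2) ^ (2 * k) := by
  have h := main_bound k hk
  constructor
  · have e1 : 1 / Real.sqrt (4 * Real.pi * k / 3) = Real.sqrt (3 / (4 * Real.pi * k)) := by
      rw [one_div, ← Real.sqrt_inv, inv_div]
    rw [e1]; exact h
  · have e2 : ((3 * Real.sqrt 3 / 2 : ℝ)) ^ (2*k) = ((27:ℝ)/4)^k := by
      rw [pow_mul]
      congr 1
      rw [div_pow, mul_pow, Real.sq_sqrt (by norm_num : (0:ℝ) ≤ 3)]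
      norm_num
    rw [e2]; exact h
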